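/- Let E be a topological graph with no singular vertices. Then the following are equivalent: (1) E is topologically free; (2) B^n = ∅ for all n ≥ 1; (3) V_n = ∅ for all n ≥ 1; (4) Γ(E^∞,σ) is essentially free. -/

import Mathlib

/-- A topological graph: vertex space `V`, edge space `E`, continuous range map `r`
and locally homeomorphic source map `s`. -/
structure TopGraph (V E : Type) [TopologicalSpace V] [TopologicalSpace E] where
  r : E → V
  s : E → V
  r_cont : Continuous r
  s_locHomeo : IsLocalHomeomorph s

namespace TopGraph

variable {V E : Type} [TopologicalSpace V] [TopologicalSpace E] (G : TopGraph V E)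

/-- The predicate that `μ : Fin n → E` is a (finite) path. -/
def IsPathFn {n : ℕ} (μ : Fin n → E) : Prop :=
  ∀ (i : ℕ) (h : i + 1 < n), G.s (μ ⟨i, Nat.lt_of_succ_lt h⟩) = G.r (μ ⟨i + 1, h⟩)

/-- The space `E^n` of paths of length `n`, with the subspace topology of the product. -/
def Path (n : ℕ) : Type := {μ : Fin n → E // G.IsPathFn μ}

instance (n : ℕ) : TopologicalSpace (G.Path n) :=
  inferInstanceAs (TopologicalSpace {μ : Fin n → E // G.IsPathFn μ})

/-- `r^n(μ) = r(μ₁)`. -/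
def pathRange {n : ℕ} (hn : 0 < n) (μ : G.Path n) : V := G.r (μ.1 ⟨0, hn⟩)

/-- `s^n(μ) = s(μₙ)`. -/
def pathSource {n : ℕ} (hn : 0 < n) (μ : G.Path n) : V :=
  G.s (μ.1 ⟨n - 1, Nat.sub_lt hn Nat.one_pos⟩)

/-- A cycle is a path whose range equals its source; its base point is its range. -/
def IsCycle {n : ℕ} (hn : 0 < n) (μ : G.Path n) : Prop :=
  G.pathRange hn μ = G.pathSource hn μ

/-- A path `μ ∈ E^n` has an entrance if some edge `e ≠ μᵢ` has `r(e) = r(μᵢ)`. -/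
def HasEntrance {n : ℕ} (μ : G.Path n) : Prop :=
  ∃ (i : Fin n) (e : E), G.r e = G.r (μ.1 i) ∧ e ≠ μ.1 i

theorem block_lt {n k : ℕ} (j : Fin k) (i : Fin n) : (j : ℕ) * n + (i : ℕ) < k * n := by
  have hi := i.2
  have hj := j.2
  calc (j : ℕ) * n + (i : ℕ) < ((j : ℕ) + 1) * n := by rw [Nat.add_mul, Nat.one_mul]; omega
    _ ≤ k * n := Nat.mul_le_mul (Nat.succ_le_of_lt hj) le_rfl

/-- The `j`-th block of length `n` of a path of length `k * n`. -/
def block {n k : ℕ} (α : G.Path (k * n)) (j : Fin k) : G.Path n :=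
  ⟨fun i => α.1 ⟨(j : ℕ) * n + (i : ℕ), block_lt j i⟩,
    fun i h => α.2 ((j : ℕ) * n + i) (block_lt j ⟨i + 1, h⟩)⟩

/-- `α ∈ kN` : every block of `α` lies in `N`. -/
def BlocksIn {n k : ℕ} (N : Set (G.Path n)) (α : G.Path (k * n)) : Prop :=
  ∀ j : Fin k, G.block α j ∈ N

/-- The set `B^n` of cycles of length `n` admitting `k ≥ 1` and an open neighbourhood `N`
satisfying conditions (1) and (2) of Notation 3.3. -/
def B (n : ℕ) (hn : 0 < n) : Set (G.Path n) :=
  {μ | G.IsCycle hn μ ∧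
    ∃ (k : ℕ) (hk : 0 < k) (N : Set (G.Path n)), IsOpen N ∧ μ ∈ N ∧
      (∀ α β : G.Path (k * n), G.BlocksIn N α → G.BlocksIn N β → α ≠ β →
        ¬ ∃ γ ∈ N, G.pathRange hn γ = G.pathSource (Nat.mul_pos hk hn) α ∧
          G.pathSource hn γ = G.pathSource (Nat.mul_pos hk hn) β) ∧
      (∀ α : G.Path (k * n), G.BlocksIn N α →
        ¬ ∃ γ ∈ N, G.IsCycle hn γ ∧ G.HasEntrance γ ∧
          G.pathRange hn γ = G.pathSource (Nat.mul_pos hk hn) α)}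

/-- The infinite path space `E^∞`, with the subspace topology of the product. -/
def InfPath : Type := {x : ℕ → E // ∀ i : ℕ, G.s (x i) = G.r (x (i + 1))}

instance : TopologicalSpace G.InfPath :=
  inferInstanceAs (TopologicalSpace {x : ℕ → E // ∀ i : ℕ, G.s (x i) = G.r (x (i + 1))})

/-- The one-sided shift on `E^∞`. -/
def shift (x : G.InfPath) : G.InfPath := ⟨fun i => x.1 (i + 1), fun i => x.2 (i + 1)⟩

/-- The segment `x_{a+1} ⋯ x_{a+len}` (0-indexed: edges `a, …, a+len-1`) of an infinite path. -/
def segment (x : G.InfPath) (a len : ℕ) : G.Path len :=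
  ⟨fun i => x.1 (a + (i : ℕ)), fun i _ => x.2 (a + i)⟩

/-- The boundary path groupoid `Γ(E^∞, σ)` as a set. -/
def Gamma : Type :=
  {g : G.InfPath × ℤ × G.InfPath //
    ∃ k l : ℕ, g.2.1 = (k : ℤ) - (l : ℤ) ∧ G.shift^[k] g.1 = G.shift^[l] g.2.2}

/-- Basic sets `U(U, W, k, l)` for the topology of `Γ(E^∞, σ)`. -/
def basicSet (U W : Set G.InfPath) (k l : ℕ) : Set G.Gamma :=
  {g | g.1.1 ∈ U ∧ g.1.2.2 ∈ W ∧ g.1.2.1 = (k : ℤ) - (l : ℤ) ∧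
    G.shift^[k] g.1.1 = G.shift^[l] g.1.2.2}

/-- The topology on `Γ(E^∞, σ)` generated by the sets `U(U, W, k, l)` with `U, W` open
and `σ^k`, `σ^l` injective on `U` resp. `W`. -/
instance : TopologicalSpace G.Gamma :=
  TopologicalSpace.generateFrom
    {S | ∃ (U W : Set G.InfPath) (k l : ℕ), IsOpen U ∧ IsOpen W ∧
      Set.InjOn (G.shift^[k]) U ∧ Set.InjOn (G.shift^[l]) W ∧ S = G.basicSet U W k l}

/-- The isotropy group bundle `Iso(Γ(E^∞, σ))`. -/
def isoSet : Set G.Gamma := {g | g.1.1 = g.1.2.2}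

/-- The interior of the isotropy group bundle. -/
def isoInterior : Set G.Gamma := interior G.isoSet

/-- The set `E^0_fin` of finite receivers. -/
def finRecv : Set V := {v | ∃ N : Set V, IsOpen N ∧ v ∈ N ∧ IsCompact (G.r ⁻¹' closure N)}

/-- The set `E^0_sce` of sources. -/
def sce : Set V := (closure (Set.range G.r))ᶜ

/-- The set `E^0_rg` of regular vertices. -/
def rg : Set V := G.finRecv \ closure G.sce

/-- The set `E^0_sg` of singular vertices. -/
def sg : Set V := G.rgᶜ

/-- The set `V_n` of vertices having an open neighbourhood consisting of base points of
cycles without entrances in `E^n`. -/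
def Vset (n : ℕ) (hn : 0 < n) : Set V :=
  {v | ∃ W : Set V, IsOpen W ∧ v ∈ W ∧
    ∀ w ∈ W, ∃ γ : G.Path n, G.IsCycle hn γ ∧ ¬ G.HasEntrance γ ∧ G.pathRange hn γ = w}

/-- `E` is topologically free if the set of base points of cycles without entrances has
empty interior. -/
def TopologicallyFree : Prop :=
  interior {v : V | ∃ (n : ℕ) (hn : 0 < n) (γ : G.Path n),
    G.IsCycle hn γ ∧ ¬ G.HasEntrance γ ∧ G.pathRange hn γ = v} = ∅

/-- The groupoid `Γ(E^∞, σ)` is essentially free if the set of units with trivial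
isotropy is dense. -/
def EssentiallyFree : Prop :=
  Dense {x : G.InfPath | ∀ g : G.Gamma, g.1.1 = x → g.1.2.2 = x → g.1.2.1 = 0}

end TopGraph

namespace TopGraph

variable {V E : Type} [TopologicalSpace V] [TopologicalSpace E] (G : TopGraph V E)

theorem shift_iter_apply (x : G.InfPath) (k i : ℕ) : (G.shift^[k] x).1 i = x.1 (i + k) := by
  induction k generalizing x i with
  | zero => rfl
  | succ k ih =>
    rw [Function.iterate_succ_apply]
    rw [ih (G.shift x) i]
    rfl

theorem continuous_coord (i : ℕ) : Continuous fun x : G.InfPath => x.1 i :=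
  (continuous_apply i).comp continuous_subtype_val

theorem continuous_pathRange {n : ℕ} (hn : 0 < n) : Continuous (G.pathRange hn) :=
  G.r_cont.comp ((continuous_apply _).comp continuous_subtype_val)

theorem noEnt {n : ℕ} {γ : G.Path n} (h : ¬ G.HasEntrance γ) :
    ∀ (i : Fin n) (e : E), G.r e = G.r (γ.1 i) → e = γ.1 i := by
  intro i e hre
  by_contra hne
  exact h ⟨i, e, hre, hne⟩

/-- Any edge-chain starting at the base point of an entrance-free cycle follows the cycle. -/
theorem followAux {n : ℕ} (hn : 0 < n) (γ : G.Path n) (hcyc : G.IsCycle hn γ)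
    (hent : ¬ G.HasEntrance γ) (m : ℕ) (f : ℕ → E)
    (hf : ∀ i, i + 1 < m → G.s (f i) = G.r (f (i + 1)))
    (h0 : 0 < m → G.r (f 0) = G.pathRange hn γ) :
    ∀ i, i < m → f i = γ.1 ⟨i % n, Nat.mod_lt _ hn⟩ := by
  intro i
  induction i with
  | zero =>
    intro hi
    refine G.noEnt hent _ _ ?_
    rw [h0 hi]
    exact congrArg (fun t : Fin n => G.r (γ.1 t)) (Fin.ext (by simp))
  | succ i ih =>
    intro hi
    have hi' : i < m := Nat.lt_of_succ_lt hi
    have hprev := ih hi'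
    have hr : G.r (f (i + 1)) = G.s (γ.1 ⟨i % n, Nat.mod_lt _ hn⟩) := by
      rw [← hf i hi, hprev]
    by_cases hc : i % n + 1 < n
    · have hmod : (i + 1) % n = i % n + 1 := by
        have h1 : (i + 1) % n = (i % n + 1 % n) % n := by rw [Nat.add_mod]
        have h2 : 1 % n = 1 := Nat.mod_eq_of_lt (by omega)
        rw [h1, h2, Nat.mod_eq_of_lt hc]
      refine G.noEnt hent ⟨(i+1) % n, Nat.mod_lt _ hn⟩ _ ?_
      rw [hr, γ.2 (i % n) hc]
      exact congrArg (fun t : Fin n => G.r (γ.1 t)) (Fin.ext (by simp [hmod]))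
    · have hlast : i % n = n - 1 := by
        have := Nat.mod_lt i hn
        omega
      have hmod : (i + 1) % n = 0 := by
        have h1 : (i + 1) % n = (i % n + 1) % n := by
          conv_lhs => rw [← Nat.mod_add_mod]
        rw [h1, hlast]
        have h2 : n - 1 + 1 = n := by omega
        rw [h2, Nat.mod_self]
      refine G.noEnt hent ⟨(i+1) % n, Nat.mod_lt _ hn⟩ _ ?_
      have hsγ : G.s (γ.1 ⟨i % n, Nat.mod_lt _ hn⟩) = G.pathSource hn γ :=
        congrArg (fun t : Fin n => G.s (γ.1 t)) (Fin.ext (by simp [hlast]))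
      rw [hr, hsγ, ← hcyc]
      exact congrArg (fun t : Fin n => G.r (γ.1 t)) (Fin.ext (by simp [hmod]))

end TopGraph

namespace TopGraph

variable {V E : Type} [TopologicalSpace V] [TopologicalSpace E] (G : TopGraph V E)

theorem recv [T2Space V] (hsg : G.sg = ∅) (v : V) : ∃ e : E, G.r e = v := by
  have hv : v ∈ G.rg := by
    by_contra h
    exact absurd (Set.eq_empty_iff_forall_notMem.mp hsg v) (fun h' => h' h)
  obtain ⟨⟨N, hNo, hvN, hKc⟩, hnc⟩ := hv
  have hvcl : v ∈ closure (Set.range G.r) := by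
    by_contra h
    exact hnc (subset_closure h)
  have hneb : (Filter.comap G.r (nhds v)).NeBot := by
    rw [Filter.comap_neBot_iff]
    intro t ht
    obtain ⟨y, hy1, z, rfl⟩ := mem_closure_iff_nhds.mp hvcl t ht
    exact ⟨z, hy1⟩
  have hK : G.r ⁻¹' closure N ∈ Filter.comap G.r (nhds v) :=
    Filter.preimage_mem_comap (Filter.mem_of_superset (hNo.mem_nhds hvN) subset_closure)
  obtain ⟨e, -, hcl⟩ := hKc.exists_clusterPt (Filter.le_principal_iff.mpr hK)
  refine ⟨e, ?_⟩
  have h1 : (nhds (G.r e) ⊓ nhds v).NeBot := by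
    have hmap : Filter.map G.r (nhds e ⊓ Filter.comap G.r (nhds v)) ≤ nhds (G.r e) ⊓ nhds v :=
      le_inf ((Filter.map_mono inf_le_left).trans (G.r_cont.continuousAt))
        ((Filter.map_mono inf_le_right).trans Filter.map_comap_le)
    haveI hcl' : (nhds e ⊓ Filter.comap G.r (nhds v)).NeBot := hcl
    exact Filter.neBot_of_le hmap
  exact eq_of_nhds_neBot h1

theorem exists_infPath [T2Space V] (hsg : G.sg = ∅) (w : V) :
    ∃ y : G.InfPath, G.r (y.1 0) = w := by
  have hf : ∀ v : V, G.r ((G.recv hsg v).choose) = v := fun v => (G.recv hsg v).choose_spec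
  let f : V → E := fun v => (G.recv hsg v).choose
  let seq : ℕ → E := fun n => Nat.rec (f w) (fun _ e => f (G.s e)) n
  refine ⟨⟨seq, fun i => ?_⟩, hf w⟩
  exact (hf (G.s (seq i))).symm

theorem exists_cyclePath {n : ℕ} (hn : 0 < n) (γ : G.Path n) (hcyc : G.IsCycle hn γ) :
    ∃ x : G.InfPath, ∀ i, x.1 i = γ.1 ⟨i % n, Nat.mod_lt _ hn⟩ := by
  refine ⟨⟨fun i => γ.1 ⟨i % n, Nat.mod_lt _ hn⟩, fun i => ?_⟩, fun i => rfl⟩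
  by_cases hc : i % n + 1 < n
  · have hmod : (i + 1) % n = i % n + 1 := by
      have h1 : (i + 1) % n = (i % n + 1) % n := by conv_lhs => rw [← Nat.mod_add_mod]
      rw [h1, Nat.mod_eq_of_lt hc]
    rw [γ.2 (i % n) hc]
    exact congrArg (fun t : Fin n => G.r (γ.1 t)) (Fin.ext (by simp [hmod]))
  · have hlast : i % n = n - 1 := by
      have := Nat.mod_lt i hn
      omega
    have hmod : (i + 1) % n = 0 := by
      have h1 : (i + 1) % n = (i % n + 1) % n := by conv_lhs => rw [← Nat.mod_add_mod]
      rw [h1, hlast]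
      have h3 : n - 1 + 1 = n := by omega
      rw [h3, Nat.mod_self]
    have hs1 : G.s (γ.1 ⟨i % n, Nat.mod_lt _ hn⟩) = G.pathSource hn γ :=
      congrArg (fun t : Fin n => G.s (γ.1 t)) (Fin.ext (by simp [hlast]))
    rw [hs1, ← hcyc]
    exact congrArg (fun t : Fin n => G.r (γ.1 t)) (Fin.ext (by simp [hmod]))

theorem per_of_shift_eq {x : G.InfPath} {k l : ℕ} (hkl : k ≤ l)
    (h : G.shift^[k] x = G.shift^[l] x) :
    ∀ m, k ≤ m → x.1 (m + (l - k)) = x.1 m := by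
  intro m hm
  have h1 : x.1 (m - k + k) = x.1 (m - k + l) := by
    rw [← G.shift_iter_apply x k (m - k), ← G.shift_iter_apply x l (m - k), h]
  have e1 : m - k + k = m := by omega
  have e2 : m - k + l = m + (l - k) := by omega
  rw [e1, e2] at h1
  exact h1.symm

/-- A point with a nontrivial periodicity is not in the trivial-isotropy set. -/
theorem notMemTriv {x : G.InfPath} {a b : ℕ} (hper : G.shift^[a] x = G.shift^[b] x)
    (hne : a ≠ b) :
    x ∉ {x : G.InfPath | ∀ g : G.Gamma, g.1.1 = x → g.1.2.2 = x → g.1.2.1 = 0} := by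
  intro hx
  have := hx ⟨(x, (a : ℤ) - (b : ℤ), x), a, b, rfl, hper⟩ rfl rfl
  simp only at this
  have : (a : ℤ) = b := by linarith [this]
  exact hne (by exact_mod_cast this)

end TopGraph

namespace TopGraph

variable {V E : Type} [TopologicalSpace V] [TopologicalSpace E] (G : TopGraph V E)

theorem path_ext {m : ℕ} {α β : G.Path m}
    (h : ∀ (i : ℕ) (hi : i < m), α.1 ⟨i, hi⟩ = β.1 ⟨i, hi⟩) : α = β :=
  Subtype.ext (funext fun i => h i.1 i.2)

theorem path_congr {m : ℕ} (α : G.Path m) {a b : ℕ} (ha : a < m) (hb : b < m) (h : a = b) :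
    α.1 ⟨a, ha⟩ = α.1 ⟨b, hb⟩ :=
  congrArg α.1 (Fin.ext h)

theorem followFin {n m : ℕ} (hn : 0 < n) (hm : 0 < m) (γ : G.Path n)
    (hcyc : G.IsCycle hn γ) (hent : ¬ G.HasEntrance γ) (α : G.Path m)
    (h0 : G.r (α.1 ⟨0, hm⟩) = G.pathRange hn γ) :
    ∀ (i : ℕ) (h : i < m), α.1 ⟨i, h⟩ = γ.1 ⟨i % n, Nat.mod_lt _ hn⟩ := by
  intro i h
  have key := G.followAux hn γ hcyc hent m (fun j => α.1 ⟨j % m, Nat.mod_lt _ hm⟩) ?_ ?_ i h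
  · rw [← key]
    exact (G.path_congr α _ _ (Nat.mod_eq_of_lt h)).symm
  · intro j hj
    show G.s (α.1 ⟨j % m, Nat.mod_lt _ hm⟩) = G.r (α.1 ⟨(j+1) % m, Nat.mod_lt _ hm⟩)
    have e1 : α.1 ⟨j % m, Nat.mod_lt _ hm⟩ = α.1 ⟨j, Nat.lt_of_succ_lt hj⟩ :=
      G.path_congr α _ _ (Nat.mod_eq_of_lt (Nat.lt_of_succ_lt hj))
    have e2 : α.1 ⟨(j+1) % m, Nat.mod_lt _ hm⟩ = α.1 ⟨j+1, hj⟩ :=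
      G.path_congr α _ _ (Nat.mod_eq_of_lt hj)
    rw [e1, e2]
    exact α.2 j hj
  · intro _
    rw [← h0]
    exact congrArg (fun t : Fin m => G.r (α.1 t)) (Fin.ext (by simp [Nat.mod_eq_of_lt hm]))

/-- If `V_n` is nonempty then `B^n` is nonempty. -/
theorem vset_to_B {n : ℕ} (hn : 0 < n) (hne : (G.Vset n hn).Nonempty) :
    (G.B n hn).Nonempty := by
  obtain ⟨v, W, hWo, hvW, hW⟩ := hne
  choose c hcyc hent hrange using hW
  have hkey : ∀ (w₁ w₂ : V) (h₁ : w₁ ∈ W) (h₂ : w₂ ∈ W), w₁ = w₂ → c w₁ h₁ = c w₂ h₂ := by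
    intro w₁ w₂ h₁ h₂ h
    subst h
    rfl
  set N : Set (G.Path n) := {γ | G.pathRange hn γ ∈ W} with hN
  have hNo : IsOpen N := hWo.preimage (G.continuous_pathRange hn)
  have hkn : 0 < 1 * n := Nat.mul_pos one_pos hn
  -- facts about paths of length 1*n with blocks in N
  have hblock : ∀ α : G.Path (1*n), G.BlocksIn N α → G.r (α.1 ⟨0, hkn⟩) ∈ W := by
    intro α hα
    have h0 := hα ⟨0, one_pos⟩
    have : G.pathRange hn (G.block α ⟨0, one_pos⟩) = G.r (α.1 ⟨0, hkn⟩) := by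
      show G.r (α.1 ⟨0 * n + 0, _⟩) = G.r (α.1 ⟨0, hkn⟩)
      exact congrArg G.r (G.path_congr α _ _ (by omega))
    rw [hN] at h0
    rw [← this]
    exact h0
  have hsrc : ∀ (α : G.Path (1*n)) (hw : G.r (α.1 ⟨0, hkn⟩) ∈ W),
      G.pathSource hkn α = G.r (α.1 ⟨0, hkn⟩) := by
    intro α hw
    have hfol := G.followFin hn hkn (c _ hw) (hcyc _ hw) (hent _ hw) α ((hrange _ hw).symm)
    have h1 : G.pathSource hkn α = G.s ((c _ hw).1 ⟨(1*n-1) % n, Nat.mod_lt _ hn⟩) := by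
      unfold pathSource
      rw [hfol (1*n-1) (by omega)]
    rw [h1]
    have h2 : ((⟨(1*n-1) % n, Nat.mod_lt _ hn⟩ : Fin n)) = ⟨n - 1, Nat.sub_lt hn Nat.one_pos⟩ :=
      Fin.ext (by
        show (1*n-1) % n = n - 1
        have h4 : 1*n - 1 = n - 1 := by omega
        rw [h4]
        exact Nat.mod_eq_of_lt (by omega))
    rw [h2]
    have h3 : G.s ((c _ hw).1 ⟨n - 1, Nat.sub_lt hn Nat.one_pos⟩) = G.pathSource hn (c _ hw) := rfl
    rw [h3, ← (hcyc _ hw), hrange _ hw]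
  -- uniqueness of length-n paths with range in W
  have huniq : ∀ (γ : G.Path n) (hw : G.pathRange hn γ ∈ W), γ = c _ hw := by
    intro γ hw
    have hfol := G.followFin hn hn (c _ hw) (hcyc _ hw) (hent _ hw) γ ((hrange _ hw).symm)
    refine G.path_ext (fun i hi => ?_)
    rw [hfol i hi]
    exact G.path_congr _ _ _ (Nat.mod_eq_of_lt hi)
  refine ⟨c v hvW, hcyc v hvW, 1, one_pos, N, hNo, ?_, ?_, ?_⟩
  · show G.pathRange hn (c v hvW) ∈ W
    rw [hrange v hvW]
    exact hvW
  · rintro α β hα hβ hab ⟨γ, hγN, hγr, hγs⟩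
    have hwα := hblock α hα
    have hwβ := hblock β hβ
    have hsα := hsrc α hwα
    have hsβ := hsrc β hwβ
    have hγW : G.pathRange hn γ ∈ W := hγN
    have hγe : γ = c _ hγW := huniq γ hγW
    have h2 : G.pathSource hn γ = G.pathRange hn γ := by
      conv_lhs => rw [hγe]
      rw [← hcyc _ hγW, hrange _ hγW]
    have hww : G.r (α.1 ⟨0, hkn⟩) = G.r (β.1 ⟨0, hkn⟩) := by
      rw [← hsα, ← hγr, ← h2, hγs, hsβ]
    apply hab
    have hfα := G.followFin hn hkn (c _ hwα) (hcyc _ hwα) (hent _ hwα) α ((hrange _ hwα).symm)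
    have hfβ := G.followFin hn hkn (c _ hwβ) (hcyc _ hwβ) (hent _ hwβ) β ((hrange _ hwβ).symm)
    refine G.path_ext (fun i hi => ?_)
    rw [hfα i hi, hfβ i hi, hkey _ _ hwα hwβ hww]
  · rintro α hα ⟨γ, hγN, hγcyc, hγent, hγr⟩
    have hγW : G.pathRange hn γ ∈ W := hγN
    apply hent _ hγW
    rw [← huniq γ hγW]
    exact hγent

end TopGraph

namespace TopGraph

variable {V E : Type} [TopologicalSpace V] [TopologicalSpace E] (G : TopGraph V E)

theorem continuous_segment (a len : ℕ) :
    Continuous fun x : G.InfPath => G.segment x a len :=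
  Continuous.subtype_mk (continuous_pi fun _ => G.continuous_coord _) _

/-- If the interior of the set of base points of entrance-free cycles is nonempty,
then the trivial-isotropy set is not dense. -/
theorem notFree_notEss
    (h : ¬ G.TopologicallyFree) : ¬ G.EssentiallyFree := by
  intro hd
  set S : Set V := {v : V | ∃ (n : ℕ) (hn : 0 < n) (γ : G.Path n),
    G.IsCycle hn γ ∧ ¬ G.HasEntrance γ ∧ G.pathRange hn γ = v} with hS
  have hne : (interior S).Nonempty := Set.nonempty_iff_ne_empty.mpr h
  set O : Set G.InfPath := (fun x : G.InfPath => G.r (x.1 0)) ⁻¹' (interior S) with hO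
  have hOopen : IsOpen O := isOpen_interior.preimage ((G.r_cont).comp (G.continuous_coord 0))
  have hOne : O.Nonempty := by
    obtain ⟨v, hv⟩ := hne
    obtain ⟨n, hn, γ, hcyc, hent, hr⟩ := interior_subset hv
    obtain ⟨x, hx⟩ := G.exists_cyclePath hn γ hcyc
    refine ⟨x, ?_⟩
    show G.r (x.1 0) ∈ interior S
    rw [hx 0]
    have : G.r (γ.1 ⟨0 % n, Nat.mod_lt _ hn⟩) = G.pathRange hn γ :=
      congrArg (fun t : Fin n => G.r (γ.1 t)) (Fin.ext (by simp))
    rw [this, hr]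
    exact hv
  obtain ⟨x, hxO, hxA⟩ := hd.inter_open_nonempty O hOopen hOne
  obtain ⟨n, hn, γ, hcyc, hent, hr⟩ := interior_subset hxO
  have hfol : ∀ i, x.1 i = γ.1 ⟨i % n, Nat.mod_lt _ hn⟩ := by
    intro i
    exact G.followAux hn γ hcyc hent (i+1) (fun j => x.1 j)
      (fun j hj => x.2 j) (fun _ => hr.symm) i (Nat.lt_succ_self i)
  have hper : G.shift^[n] x = G.shift^[0] x := by
    apply Subtype.ext
    funext i
    rw [G.shift_iter_apply, G.shift_iter_apply, hfol (i+n), hfol (i+0)]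
    exact congrArg γ.1 (Fin.ext (by simp [Nat.add_mod_right]))
  exact G.notMemTriv hper (by omega) hxA

/-- If some `B^n` is nonempty, then the trivial-isotropy set is not dense. -/
theorem B_notEss {n : ℕ} (hn : 0 < n) (hBne : (G.B n hn).Nonempty) :
    ¬ G.EssentiallyFree := by
  intro hd
  obtain ⟨μ, hμcyc, k, hk, N, hNo, hμN, hcond1, hcond2⟩ := hBne
  have hkn : 0 < k * n := Nat.mul_pos hk hn
  set O : Set G.InfPath := ⋂ j ∈ Finset.range (k+1), {x | G.segment x (j*n) n ∈ N} with hO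
  have hOopen : IsOpen O := by
    refine isOpen_biInter_finset (fun j _ => ?_)
    exact hNo.preimage (G.continuous_segment _ _)
  have hOne : O.Nonempty := by
    obtain ⟨x, hx⟩ := G.exists_cyclePath hn μ hμcyc
    refine ⟨x, ?_⟩
    simp only [hO, Set.mem_iInter, Set.mem_setOf_eq]
    intro j _
    have : G.segment x (j*n) n = μ := by
      refine G.path_ext (fun i hi => ?_)
      show x.1 (j*n + i) = _
      rw [hx (j*n+i)]
      refine G.path_congr μ _ _ ?_
      rw [Nat.add_comm, Nat.add_mul_mod_self_right, Nat.mod_eq_of_lt hi]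
    rw [this]
    exact hμN
  obtain ⟨x, hxO, hxA⟩ := hd.inter_open_nonempty O hOopen hOne
  have hseg : ∀ j, j ≤ k → G.segment x (j*n) n ∈ N := by
    intro j hj
    simp only [hO, Set.mem_iInter, Set.mem_setOf_eq] at hxO
    exact hxO j (Finset.mem_range.mpr (by omega))
  -- the two long paths
  set α : G.Path (k*n) := G.segment x 0 (k*n) with hα
  set β : G.Path (k*n) := G.segment x n (k*n) with hβ
  set γ' : G.Path n := G.segment x (k*n) n with hγ'
  have hαB : G.BlocksIn N α := by
    intro j
    have : G.block α j = G.segment x (j*n) n := by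
      refine G.path_ext (fun i hi => ?_)
      show x.1 (0 + (j*n + i)) = x.1 (j*n + i)
      exact congrArg x.1 (by omega)
    rw [this]
    exact hseg j (le_of_lt j.2)
  have hβB : G.BlocksIn N β := by
    intro j
    have : G.block β j = G.segment x ((j+1)*n) n := by
      refine G.path_ext (fun i hi => ?_)
      show x.1 (n + (j*n + i)) = x.1 ((j+1)*n + i)
      exact congrArg x.1 (by ring)
    rw [this]
    exact hseg (j+1) j.2
  have hγ'N : γ' ∈ N := hseg k le_rfl
  -- range/source bookkeeping
  have hrs1 : G.pathRange hn γ' = G.pathSource hkn α := by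
    show G.r (x.1 (k*n + 0)) = G.s (x.1 (0 + (k*n - 1)))
    have h1 : G.s (x.1 (0 + (k*n-1))) = G.r (x.1 (0 + (k*n-1) + 1)) := x.2 _
    rw [h1]
    exact congrArg (fun t => G.r (x.1 t)) (by omega)
  have hrs2 : G.pathSource hn γ' = G.pathSource hkn β := by
    show G.s (x.1 (k*n + (n-1))) = G.s (x.1 (n + (k*n - 1)))
    exact congrArg (fun t => G.s (x.1 t)) (by omega)
  -- α = β
  have hab : α = β := by
    by_contra hab
    exact hcond1 α β hαB hβB hab ⟨γ', hγ'N, hrs1, hrs2⟩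
  have hper0 : ∀ i, i < k*n → x.1 i = x.1 (n + i) := by
    intro i hi
    have h2 : x.1 (0 + i) = x.1 (n + i) := congrFun (congrArg Subtype.val hab) ⟨i, hi⟩
    rw [← h2]
    exact congrArg x.1 (by omega)
  -- γ' is a cycle
  have hγ'cyc : G.IsCycle hn γ' := by
    show G.pathRange hn γ' = G.pathSource hn γ'
    rw [hrs1]
    show G.s (x.1 (0 + (k*n - 1))) = G.s (x.1 (k*n + (n-1)))
    have h1 : x.1 (k*n - 1) = x.1 (n + (k*n - 1)) := hper0 _ (by omega)
    have e1 : (0 + (k*n - 1)) = k*n - 1 := by omega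
    rw [e1, h1]
    exact congrArg (fun t => G.s (x.1 t)) (by omega)
  -- γ' has no entrance
  have hγ'ent : ¬ G.HasEntrance γ' := by
    intro hent
    exact hcond2 α hαB ⟨γ', hγ'N, hγ'cyc, hent, hrs1⟩
  -- the tail follows γ'
  have htail : ∀ m, x.1 (k*n + m) = γ'.1 ⟨m % n, Nat.mod_lt _ hn⟩ := by
    intro m
    exact G.followAux hn γ' hγ'cyc hγ'ent (m+1) (fun j => x.1 (k*n + j))
      (fun j hj => by
        have := x.2 (k*n + j)
        rw [this]
        exact congrArg (fun t => G.r (x.1 t)) (by omega))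
      (fun _ => rfl) m (Nat.lt_succ_self m)
  -- full periodicity
  have hper : ∀ m, x.1 (m + n) = x.1 m := by
    intro m
    by_cases hm : m < k*n
    · rw [(by omega : m + n = n + m)]
      exact (hper0 m hm).symm
    · have e1 : m + n = k*n + (m - k*n + n) := by omega
      have e2 : m = k*n + (m - k*n) := by omega
      rw [e1, htail (m - k*n + n)]
      conv_rhs => rw [e2, htail (m - k*n)]
      exact congrArg γ'.1 (Fin.ext (by simp [Nat.add_mod_right]))
  have hsh : G.shift^[n] x = G.shift^[0] x := by
    apply Subtype.ext
    funext i
    rw [G.shift_iter_apply, G.shift_iter_apply, hper i]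
    exact congrArg x.1 (by omega)
  exact G.notMemTriv hsh (by omega) hxA

end TopGraph

open TopologicalSpace in
theorem TopGraphAux.onePoint_secondCountable (X : Type) [TopologicalSpace X] [T2Space X]
    [LocallyCompactSpace X] [SecondCountableTopology X] :
    SecondCountableTopology (OnePoint X) := by
  obtain ⟨B, hBc, -, hB⟩ := exists_countable_basis X
  let K : CompactExhaustion X := CompactExhaustion.choice X
  refine IsTopologicalBasis.secondCountableTopology
    (b := ((fun U => (OnePoint.some '' U : Set (OnePoint X))) '' B) ∪
      (Set.range fun n => ((OnePoint.some '' (K n) : Set (OnePoint X))ᶜ)))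
    ?_ ?_
  · refine isTopologicalBasis_of_isOpen_of_nhds ?_ ?_
    · rintro s (⟨U, hU, rfl⟩ | ⟨n, rfl⟩)
      · exact OnePoint.isOpenEmbedding_coe.isOpenMap _ (hB.isOpen hU)
      · exact isOpen_compl_iff.mpr ((K.isCompact n).image OnePoint.continuous_coe).isClosed
    · rintro (_ | x) s hx hs
      · have h1 := (OnePoint.isOpen_iff_of_mem hx).mp hs
        obtain ⟨n, hn⟩ := K.exists_superset_of_isCompact h1.2
        refine ⟨(OnePoint.some '' (K n))ᶜ, Or.inr ⟨n, rfl⟩, ?_, ?_⟩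
        · rintro ⟨z, _, h⟩
          exact (Option.some_ne_none z h).elim
        · rintro (_ | y) hy
          · exact hx
          · by_contra hys
            exact hy ⟨y, hn hys, rfl⟩
      · have : OnePoint.some ⁻¹' s ∈ nhds x :=
          (OnePoint.continuous_coe.continuousAt).preimage_mem_nhds (hs.mem_nhds hx)
        obtain ⟨U, hU, hxU, hUs⟩ := hB.mem_nhds_iff.mp this
        exact ⟨OnePoint.some '' U, Or.inl ⟨U, hU, rfl⟩, ⟨x, hxU, rfl⟩, by
          rintro y ⟨z, hz, rfl⟩; exact hUs hz⟩
  · exact (hBc.image _).union (Set.countable_range _)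

theorem TopGraphAux.polish_of_lc (X : Type) [TopologicalSpace X] [T2Space X]
    [LocallyCompactSpace X] [SecondCountableTopology X] : PolishSpace X := by
  haveI : SecondCountableTopology (OnePoint X) := TopGraphAux.onePoint_secondCountable X
  haveI : PolishSpace (OnePoint X) := by
    letI m := TopologicalSpace.metrizableSpaceMetric (OnePoint X)
    exact inferInstance
  haveI : PolishSpace (Set.range (OnePoint.some : X → OnePoint X)) :=
    OnePoint.isOpenEmbedding_coe.isOpen_range.polishSpace
  exact (OnePoint.isOpenEmbedding_coe.isEmbedding.toHomeomorph).isClosedEmbedding.polishSpace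

namespace TopGraph

variable {V E : Type} [TopologicalSpace V] [TopologicalSpace E] (G : TopGraph V E)

theorem isClosed_infPathSet [T2Space V] :
    IsClosed {x : ℕ → E | ∀ i : ℕ, G.s (x i) = G.r (x (i + 1))} := by
  have : {x : ℕ → E | ∀ i : ℕ, G.s (x i) = G.r (x (i + 1))} =
      ⋂ i : ℕ, {x : ℕ → E | G.s (x i) = G.r (x (i + 1))} := by
    ext x
    simp [Set.mem_iInter]
  rw [this]
  refine isClosed_iInter (fun i => ?_)
  exact isClosed_eq (G.s_locHomeo.continuous.comp (continuous_apply i))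
    (G.r_cont.comp (continuous_apply (i+1)))

theorem polish_infPath [T2Space V] [T2Space E] [LocallyCompactSpace E]
    [SecondCountableTopology E] : PolishSpace G.InfPath := by
  haveI : PolishSpace E := TopGraphAux.polish_of_lc E
  haveI : PolishSpace (ℕ → E) := inferInstance
  exact IsClosed.polishSpace (G.isClosed_infPathSet)

theorem baire_infPath [T2Space V] [T2Space E] [LocallyCompactSpace E]
    [SecondCountableTopology E] : BaireSpace G.InfPath := by
  haveI := G.polish_infPath
  letI := TopologicalSpace.upgradeIsCompletelyMetrizable G.InfPath
  infer_instance

/-- Local continuous sections of the source map. -/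
theorem exists_section (e : E) :
    ∃ t : V → E, ContinuousAt t (G.s e) ∧ t (G.s e) = e ∧
      ∀ᶠ w in nhds (G.s e), G.s (t w) = w := by
  obtain ⟨φ, he, hφ⟩ := G.s_locHomeo e
  have hse : G.s e = φ e := by rw [hφ]
  have htar : G.s e ∈ φ.target := hse ▸ (φ.map_source he)
  refine ⟨φ.symm, ?_, ?_, ?_⟩
  · exact (φ.continuousAt_symm htar)
  · rw [hse, φ.left_inv he]
  · filter_upwards [φ.open_target.mem_nhds htar] with w hw
    rw [hφ]
    exact φ.right_inv hw

end TopGraph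

namespace TopGraph

variable {V E : Type} [TopologicalSpace V] [TopologicalSpace E] (G : TopGraph V E)

theorem continuous_shift : Continuous G.shift :=
  Continuous.subtype_mk (continuous_pi fun i => G.continuous_coord (i+1)) _

/-- Backward perturbation of the first `q` edges of an infinite path by sections of `s`. -/
theorem chain (x : G.InfPath) :
    ∀ (q : ℕ), 0 < q →
    ∃ f : V → ℕ → E,
      (∀ i, i < q → Filter.Tendsto (fun w => f w i)
        (nhds (G.s (x.1 (q-1)))) (nhds (x.1 i))) ∧
      (∀ᶠ w in nhds (G.s (x.1 (q-1))),
        (∀ i, i + 1 < q → G.s (f w i) = G.r (f w (i+1))) ∧ G.s (f w (q-1)) = w) := by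
  intro q
  induction q with
  | zero => omega
  | succ q ih =>
    intro _
    by_cases hq : 0 < q
    · -- successor step
      obtain ⟨t, htc, hte, htev⟩ := G.exists_section (x.1 q)
      obtain ⟨f', htend', hev'⟩ := ih hq
      have hvr : G.r (x.1 q) = G.s (x.1 (q-1)) := by
        have h1 := x.2 (q-1)
        rw [h1]
        exact congrArg (fun m => G.r (x.1 m)) (by omega)
      have hrt : Filter.Tendsto (fun w => G.r (t w)) (nhds (G.s (x.1 q)))
          (nhds (G.s (x.1 (q-1)))) := by
        have h2 : Filter.Tendsto (fun w => G.r (t w)) (nhds (G.s (x.1 q)))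
            (nhds (G.r (t (G.s (x.1 q))))) := (G.r_cont.continuousAt).comp htc
        rwa [hte, hvr] at h2
      classical
      refine ⟨fun w i => if i = q then t w else f' (G.r (t w)) i, ?_, ?_⟩
      · intro i hi
        by_cases hiq : i = q
        · simp only [if_pos hiq]
          rw [hiq, (show (q+1) - 1 = q from by omega)]
          have h3 := htc
          rwa [ContinuousAt, hte] at h3
        · simp only [if_neg hiq]
          have : (q+1) - 1 = q := by omega
          rw [this]
          exact (htend' i (by omega)).comp hrt
      · have e1 : (q+1) - 1 = q := by omega
        rw [e1]
        filter_upwards [htev, hrt.eventually hev'] with w hw1 hw2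
        constructor
        · intro i hi
          by_cases hiq : i + 1 = q
          · have hiq' : i ≠ q := by omega
            simp only [if_neg hiq', if_pos hiq]
            have h7 : i = q - 1 := by omega
            rw [h7]
            exact hw2.2
          · have h4 : i + 1 < q := by omega
            have h5 : i ≠ q := by omega
            have h6 : i + 1 ≠ q := hiq
            simp only [if_neg h5, if_neg h6]
            exact hw2.1 i h4
        · simp only [if_pos rfl]
          exact hw1
    · -- base case q = 0, so prove for q = 1
      have hq0 : q = 0 := by omega
      subst hq0
      obtain ⟨t, htc, hte, htev⟩ := G.exists_section (x.1 0)
      refine ⟨fun w _ => t w, ?_, ?_⟩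
      · intro i hi
        have hi0 : i = 0 := by omega
        subst hi0
        have h3 := htc
        rwa [ContinuousAt, hte] at h3
      · filter_upwards [htev] with w hw
        exact ⟨fun i hi => by omega, hw⟩

end TopGraph

namespace TopGraph

variable {V E : Type} [TopologicalSpace V] [TopologicalSpace E] (G : TopGraph V E)

theorem t2_infPath [T2Space E] : T2Space G.InfPath :=
  inferInstanceAs (T2Space {x : ℕ → E // ∀ i : ℕ, G.s (x i) = G.r (x (i + 1))})

theorem notEss_vset [T2Space V] [T2Space E] [LocallyCompactSpace E]
    [SecondCountableTopology E] (hsg : G.sg = ∅) (hness : ¬ G.EssentiallyFree) :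
    ∃ (n : ℕ) (hn : 0 < n), (G.Vset n hn).Nonempty := by
  classical
  haveI := G.baire_infPath
  haveI := G.t2_infPath
  set A : Set G.InfPath :=
    {x : G.InfPath | ∀ g : G.Gamma, g.1.1 = x → g.1.2.2 = x → g.1.2.1 = 0} with hA
  -- a nonempty open set disjoint from A
  set O : Set G.InfPath := (closure A)ᶜ with hOdef
  have hOopen : IsOpen O := isClosed_closure.isOpen_compl
  have hOne : O.Nonempty := by
    by_contra h
    apply hness
    intro x
    by_contra hx
    exact h ⟨x, hx⟩
  -- the closed periodicity sets
  set C : ℕ × ℕ → Set G.InfPath :=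
    fun p => {x | G.shift^[p.1] x = G.shift^[p.1 + p.2 + 1] x} ∪ closure A with hC
  have hCclosed : ∀ p, IsClosed (C p) := by
    intro p
    refine IsClosed.union ?_ isClosed_closure
    exact isClosed_eq (G.continuous_shift.iterate p.1)
      (G.continuous_shift.iterate (p.1 + p.2 + 1))
  have hCcover : ⋃ p, C p = Set.univ := by
    refine Set.eq_univ_of_forall (fun x => ?_)
    by_cases hx : x ∈ closure A
    · exact Set.mem_iUnion.mpr ⟨(0,0), Or.inr hx⟩
    · have hxA : x ∉ A := fun h => hx (subset_closure h)
      simp only [hA, Set.mem_setOf_eq] at hxA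
      push_neg at hxA
      obtain ⟨g, hg1, hg2, hg3⟩ := hxA
      obtain ⟨a, b, hab, hper⟩ := g.2
      rw [hg1, hg2] at hper
      have hne : a ≠ b := by
        intro h
        apply hg3
        rw [hab, h]
        ring
      rcases Nat.lt_or_ge a b with h | h
      · refine Set.mem_iUnion.mpr ⟨(a, b - a - 1), Or.inl ?_⟩
        show G.shift^[a] x = G.shift^[a + (b - a - 1) + 1] x
        rw [(show a + (b - a - 1) + 1 = b from by omega)]
        exact hper
      · have h' : b < a := by omega
        refine Set.mem_iUnion.mpr ⟨(b, a - b - 1), Or.inl ?_⟩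
        show G.shift^[b] x = G.shift^[b + (a - b - 1) + 1] x
        rw [(show b + (a - b - 1) + 1 = a from by omega)]
        exact hper.symm
  -- Baire category: some C p has interior meeting O
  have hdense := dense_iUnion_interior_of_closed hCclosed hCcover
  obtain ⟨x₀, hx₀O, hx₀U⟩ := hdense.inter_open_nonempty O hOopen hOne
  obtain ⟨p, hx₀p⟩ := Set.mem_iUnion.mp hx₀U
  set k : ℕ := p.1
  set n : ℕ := p.2 + 1
  have hn : 0 < n := Nat.succ_pos _
  set P : Set G.InfPath := interior (C p) ∩ O with hPdef
  have hPopen : IsOpen P := isOpen_interior.inter hOopen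
  have hx₀P : x₀ ∈ P := ⟨hx₀p, hx₀O⟩
  have hPper : ∀ z ∈ P, G.shift^[k] z = G.shift^[k + n] z := by
    rintro z ⟨hz1, hz2⟩
    have := interior_subset hz1
    rcases this with h | h
    · rw [(show k + n = k + p.2 + 1 from by omega)]
      exact h
    · exact absurd h hz2
  -- extract a finite product neighbourhood inside P
  have hPnhds : P ∈ nhds x₀ := hPopen.mem_nhds hx₀P
  have hnhds_eq : nhds x₀ = Filter.comap Subtype.val (nhds x₀.1) := nhds_induced _ _
  rw [hnhds_eq] at hPnhds
  obtain ⟨P', hP'mem, hP'sub⟩ := Filter.mem_comap.mp hPnhds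
  rw [nhds_pi, Filter.mem_pi'] at hP'mem
  obtain ⟨I, t, ht, htsub⟩ := hP'mem
  have hPi : ∀ z : G.InfPath, (∀ i ∈ I, z.1 i ∈ t i) → z ∈ P := by
    intro z hz
    exact hP'sub (htsub (fun i hi => hz i hi))
  -- choose the perturbation position
  set q : ℕ := I.sup id + k + n + 1 with hqdef
  have hq0 : 0 < q := by omega
  have hqk : k ≤ q := by omega
  have hqI : ∀ i ∈ I, i < q := by
    intro i hi
    have h := Finset.le_sup (f := id) hi
    simp only [id_eq] at h
    omega
  set v : V := G.s (x₀.1 (q-1)) with hv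
  obtain ⟨f, htend, hev⟩ := G.chain x₀ q hq0
  -- tail paths from arbitrary vertices
  have hz : ∀ w : V, G.r (((G.exists_infPath hsg w).choose).1 0) = w :=
    fun w => (G.exists_infPath hsg w).choose_spec
  set z : V → G.InfPath := fun w => (G.exists_infPath hsg w).choose with hzdef
  -- the eventual statement
  have hIev : ∀ᶠ w in nhds v, ∀ i ∈ (I : Finset ℕ), f w i ∈ t i := by
    rw [Filter.eventually_all_finset]
    intro i hi
    exact (htend i (hqI i hi)).eventually (ht i)
  have key : ∀ᶠ w in nhds v, ∃ y : G.InfPath,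
      G.r (y.1 q) = w ∧ (∀ i ∈ I, y.1 i ∈ t i) := by
    filter_upwards [hev, hIev] with w hw1 hw2
    refine ⟨⟨fun m => if h : m < q then f w m else (z w).1 (m - q), ?_⟩, ?_, ?_⟩
    · intro m
      beta_reduce
      by_cases h1 : m + 1 < q
      · rw [dif_pos (by omega : m < q), dif_pos h1]
        exact hw1.1 m h1
      · by_cases h2 : m + 1 = q
        · rw [dif_pos (by omega : m < q), dif_neg (by omega : ¬ (m + 1 < q))]
          have e1 : f w m = f w (q - 1) := by rw [(show m = q - 1 from by omega)]
          have e2 : m + 1 - q = 0 := by omega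
          rw [e1, e2, hw1.2, hz w]
        · rw [dif_neg (by omega : ¬ (m < q)), dif_neg (by omega : ¬ (m + 1 < q))]
          have e3 := (z w).2 (m - q)
          rw [e3]
          exact congrArg (fun s => G.r ((z w).1 s)) (by omega)
    · show G.r (if h : q < q then f w q else (z w).1 (q - q)) = w
      rw [dif_neg (by omega : ¬ (q < q)), (show q - q = 0 from by omega), hz w]
    · intro i hi
      show (if h : i < q then f w i else (z w).1 (i - q)) ∈ t i
      rw [dif_pos (hqI i hi)]
      exact hw2 i hi
  obtain ⟨W', hW'mem, hW'⟩ := Filter.eventually_iff_exists_mem.mp key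
  obtain ⟨W, hWsub, hWopen, hvW⟩ := mem_nhds_iff.mp hW'mem
  refine ⟨n, hn, v, W, hWopen, hvW, ?_⟩
  intro w hwW
  obtain ⟨y, hyq, hyt⟩ := hW' w (hWsub hwW)
  have hyP : y ∈ P := hPi y hyt
  have hyper : ∀ m, k ≤ m → y.1 (m + n) = y.1 m := by
    intro m hm
    have h1 := G.per_of_shift_eq (by omega : k ≤ k + n) (hPper y hyP) m hm
    rwa [(show k + n - k = n from by omega)] at h1
  -- the cycle at w
  refine ⟨G.segment y q n, ?_, ?_, ?_⟩
  · show G.pathRange hn (G.segment y q n) = G.pathSource hn (G.segment y q n)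
    show G.r (y.1 (q + 0)) = G.s (y.1 (q + (n - 1)))
    have h1 := y.2 (q + (n-1))
    rw [h1, (show q + (n-1) + 1 = q + n from by omega), hyper q hqk]
  · rintro ⟨i, e, hre, hne⟩
    have hre' : G.r e = G.r (y.1 (q + (i : ℕ))) := hre
    set p' : ℕ := q + (i : ℕ) + n with hp'def
    have hyp' : y.1 p' = y.1 (q + (i : ℕ)) := hyper (q + i) (by omega)
    obtain ⟨y', hy'val⟩ : ∃ y' : G.InfPath, ∀ m, y'.1 m =
        (if m < p' then y.1 m else if m = p' then e else (z (G.s e)).1 (m - p' - 1)) := by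
      refine ⟨⟨fun m => if m < p' then y.1 m else if m = p' then e
        else (z (G.s e)).1 (m - p' - 1), ?_⟩, fun m => rfl⟩
      intro m
      beta_reduce
      by_cases h1 : m + 1 < p'
      · rw [if_pos (by omega : m < p'), if_pos h1]
        exact y.2 m
      · by_cases h2 : m + 1 = p'
        · rw [if_pos (by omega : m < p'), if_neg (by omega : ¬ (m + 1 < p')), if_pos h2]
          have h3 := y.2 m
          rw [h3, h2, hyp', ← hre']
        · by_cases h3 : m = p'
          · rw [if_neg (by omega : ¬ (m < p')), if_pos h3,
              if_neg (by omega : ¬ (m + 1 < p')), if_neg (by omega : ¬ (m + 1 = p'))]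
            have h4 : m + 1 - p' - 1 = 0 := by omega
            rw [h4, hz (G.s e)]
          · rw [if_neg (by omega : ¬ (m < p')), if_neg h3,
              if_neg (by omega : ¬ (m + 1 < p')), if_neg (by omega : ¬ (m + 1 = p'))]
            have h5 := (z (G.s e)).2 (m - p' - 1)
            rw [h5]
            exact congrArg (fun s => G.r ((z (G.s e)).1 s)) (by omega)
    have hy'P : y' ∈ P := by
      refine hPi y' (fun i' hi' => ?_)
      rw [hy'val, if_pos (by have h := hqI i' hi'; omega : i' < p')]
      exact hyt i' hi'
    have hy'per : y'.1 (q + (i : ℕ) + n) = y'.1 (q + (i : ℕ)) := by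
      have h1 := G.per_of_shift_eq (by omega : k ≤ k + n) (hPper y' hy'P) (q + i) (by omega)
      rwa [(show k + n - k = n from by omega)] at h1
    have hL : y'.1 (q + (i : ℕ) + n) = e := by
      rw [hy'val, if_neg (by omega : ¬ (q + (i : ℕ) + n < p')),
        if_pos (by omega : q + (i : ℕ) + n = p')]
    have hR : y'.1 (q + (i : ℕ)) = y.1 (q + (i : ℕ)) := by
      rw [hy'val, if_pos (by omega : q + (i : ℕ) < p')]
    rw [hL, hR] at hy'per
    exact hne hy'per
  · show G.r (y.1 (q + 0)) = w
    rw [← hyq]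

end TopGraph


/-- Corollary 3.10: for a topological graph without singular vertices, the following are
equivalent: topological freeness; `B^n = ∅` for all `n`; `V_n = ∅` for all `n`;
essential freeness of `Γ(E^∞,σ)`. -/
theorem stmt8 {V E : Type} [TopologicalSpace V] [TopologicalSpace E]
    [T2Space V] [T2Space E] [LocallyCompactSpace V] [LocallyCompactSpace E]
    [SecondCountableTopology V] [SecondCountableTopology E]
    (G : TopGraph V E)
    (hsg : G.sg = ∅) :
    List.TFAE [G.TopologicallyFree,
      ∀ (n : ℕ) (hn : 0 < n), G.B n hn = ∅,
      ∀ (n : ℕ) (hn : 0 < n), G.Vset n hn = ∅,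
      G.EssentiallyFree] := by
  tfae_have 1 → 3 := by
    intro h1 n hn
    rw [Set.eq_empty_iff_forall_notMem]
    intro v hv
    obtain ⟨W, hWo, hvW, hW⟩ := hv
    have hmem : v ∈ interior {v : V | ∃ (n : ℕ) (hn : 0 < n) (γ : G.Path n),
        G.IsCycle hn γ ∧ ¬ G.HasEntrance γ ∧ G.pathRange hn γ = v} := by
      rw [mem_interior]
      exact ⟨W, fun w hw => ⟨n, hn, hW w hw⟩, hWo, hvW⟩
    rw [h1] at hmem
    exact hmem
  tfae_have 2 → 3 := by
    intro h2 n hn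
    by_contra h
    have hB := G.vset_to_B hn (Set.nonempty_iff_ne_empty.mpr h)
    rw [h2 n hn] at hB
    exact Set.not_nonempty_empty hB
  tfae_have 4 → 2 := by
    intro h4 n hn
    by_contra h
    exact (G.B_notEss hn (Set.nonempty_iff_ne_empty.mpr h)) h4
  tfae_have 4 → 1 := by
    intro h4
    by_contra h1
    exact (G.notFree_notEss h1) h4
  tfae_have 3 → 4 := by
    intro h3
    by_contra h4
    obtain ⟨n, hn, hne⟩ := G.notEss_vset hsg h4
    rw [h3 n hn] at hne
    exact Set.not_nonempty_empty hne
  tfae_finish
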